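/- Suppose two conditional densities of the form p_θ(x|y) = Z(y;θ)⁻¹ exp(−f_θ(x)ᵀg_θ(y)) and p_θ'(x|y) = Z(y;θ')⁻¹ exp(−f_θ'(x)ᵀg_θ'(y)) are equal for all (x,y), with feature maps f_θ, f_θ' : ℝ^d → ℝⁿ and g_θ, g_θ' : ℝ^m → ℝⁿ. If there exist n+1 points y⁰,...,yⁿ such that the n×n matrix R = (g_θ(y¹)−g_θ(y⁰), ..., g_θ(yⁿ)−g_θ(y⁰)) is invertible, then there exist an n×n matrix A and a vector c ∈ ℝⁿ with f_θ(x) = A f_θ'(x) + c for all x. If moreover f_θ is differentiable with full-rank Jacobian, then rank(A) ≥ min(n,d). -/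

import Mathlib

/-- Weak identifiability of the conditional energy-based model
`p_θ(x|y) = Z(y;θ)⁻¹ exp(−f_θ(x)ᵀg_θ(y))`: if two such models define the same
conditional density and there exist `n+1` points `y⁰, …, yⁿ` for which the matrix
`R = (g(y¹)−g(y⁰), …, g(yⁿ)−g(y⁰))` is invertible, then `f = A f' + c` for some matrix
`A` and vector `c`; if moreover `f` is differentiable with full-rank Jacobian, then
`rank(A) ≥ min(n,d)`. -/
theorem icebeem_weak_identifiability {d m n : ℕ}
    (f f' : (Fin d → ℝ) → Fin n → ℝ) (g g' : (Fin m → ℝ) → Fin n → ℝ)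
    (Z Z' : (Fin m → ℝ) → ℝ)
    (hZ : ∀ y, Z y = ∫ x : Fin d → ℝ, Real.exp (-(∑ i, f x i * g y i)))
    (hZ' : ∀ y, Z' y = ∫ x : Fin d → ℝ, Real.exp (-(∑ i, f' x i * g' y i)))
    (hZpos : ∀ y, 0 < Z y) (hZ'pos : ∀ y, 0 < Z' y)
    (heq : ∀ x y, Real.exp (-(∑ i, f x i * g y i)) / Z y
        = Real.exp (-(∑ i, f' x i * g' y i)) / Z' y)
    (ypts : Fin (n + 1) → (Fin m → ℝ))
    (hR : IsUnit (Matrix.of (fun i j : Fin n => g (ypts j.succ) i - g (ypts 0) i)).det) :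
    ∃ (A : Matrix (Fin n) (Fin n) ℝ) (c : Fin n → ℝ),
      (∀ x, f x = A.mulVec (f' x) + c) ∧
      ((Differentiable ℝ f ∧
          ∀ x, LinearMap.rank (fderiv ℝ f x).toLinearMap = (min n d : ℕ)) →
        min n d ≤ A.rank) := by
  classical
  set R : Matrix (Fin n) (Fin n) ℝ :=
    Matrix.of (fun i j : Fin n => g (ypts j.succ) i - g (ypts 0) i) with hRdef
  set R' : Matrix (Fin n) (Fin n) ℝ :=
    Matrix.of (fun i j : Fin n => g' (ypts j.succ) i - g' (ypts 0) i) with hR'def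
  set L : (Fin m → ℝ) → ℝ := fun y => Real.log (Z y) - Real.log (Z' y) with hLdef
  -- key pointwise identity
  have key : ∀ x y, (∑ i, f' x i * g' y i) - (∑ i, f x i * g y i) = L y := by
    intro x y
    have h := heq x y
    have hZne : Z y ≠ 0 := (hZpos y).ne'
    have hZ'ne : Z' y ≠ 0 := (hZ'pos y).ne'
    have h2 : Real.exp (-(∑ i, f x i * g y i)) * Z' y
        = Real.exp (-(∑ i, f' x i * g' y i)) * Z y := by
      field_simp at h
      linarith [h]
    have h3 := congrArg Real.log h2
    rw [Real.log_mul (Real.exp_ne_zero _) hZ'ne, Real.log_mul (Real.exp_ne_zero _) hZne,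
      Real.log_exp, Real.log_exp] at h3
    simp only [hLdef]
    linarith
  -- transpose relation
  have hRT : IsUnit R.transpose.det := by rwa [Matrix.det_transpose]
  set w : Fin n → ℝ := fun j => L (ypts 0) - L (ypts j.succ) with hwdef
  have hmain : ∀ x, R.transpose.mulVec (f x) = R'.transpose.mulVec (f' x) + w := by
    intro x
    funext j
    have k0 := key x (ypts 0)
    have kj := key x (ypts j.succ)
    simp only [Matrix.mulVec, dotProduct, Matrix.transpose_apply, Pi.add_apply,
      hRdef, hR'def, Matrix.of_apply, hwdef]
    have e1 : ∑ i, (g (ypts j.succ) i - g (ypts 0) i) * f x i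
        = (∑ i, f x i * g (ypts j.succ) i) - ∑ i, f x i * g (ypts 0) i := by
      rw [← Finset.sum_sub_distrib]; congr 1; funext i; ring
    have e2 : ∑ i, (g' (ypts j.succ) i - g' (ypts 0) i) * f' x i
        = (∑ i, f' x i * g' (ypts j.succ) i) - ∑ i, f' x i * g' (ypts 0) i := by
      rw [← Finset.sum_sub_distrib]; congr 1; funext i; ring
    rw [e1, e2]
    linarith
  refine ⟨R.transpose⁻¹ * R'.transpose, R.transpose⁻¹.mulVec w, ?_, ?_⟩
  · intro x
    have h1 : R.transpose⁻¹.mulVec (R.transpose.mulVec (f x)) = f x := by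
      rw [Matrix.mulVec_mulVec, Matrix.nonsing_inv_mul _ hRT, Matrix.one_mulVec]
    rw [← h1, hmain x, Matrix.mulVec_add, Matrix.mulVec_mulVec]
  · rintro ⟨hdiff, hrank⟩
    set A : Matrix (Fin n) (Fin n) ℝ := R.transpose⁻¹ * R'.transpose with hAdef
    set c : Fin n → ℝ := R.transpose⁻¹.mulVec w with hcdef
    have hfx : ∀ x, f x = A.mulVec (f' x) + c := by
      intro x
      have h1 : R.transpose⁻¹.mulVec (R.transpose.mulVec (f x)) = f x := by
        rw [Matrix.mulVec_mulVec, Matrix.nonsing_inv_mul _ hRT, Matrix.one_mulVec]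
      rw [← h1, hmain x, Matrix.mulVec_add, Matrix.mulVec_mulVec]
    set U : Submodule ℝ (Fin n → ℝ) := LinearMap.range A.mulVecLin with hUdef
    obtain ⟨V, hV⟩ := Submodule.exists_isCompl U
    set πL : (Fin n → ℝ) →ₗ[ℝ] V := Submodule.projectionOnto V U hV.symm with hπdef
    set πC : (Fin n → ℝ) →L[ℝ] V := LinearMap.toContinuousLinearMap πL with hπCdef
    -- π ∘ f is constant
    have hconst : ∀ x, πC (f x) = πL c := by
      intro x
      have : πC (f x) = πL (A.mulVec (f' x)) + πL c := by
        rw [hfx x]; simp [hπCdef, map_add]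
      rw [this, Submodule.projectionOnto_apply_of_mem_right hV.symm
        (by exact LinearMap.mem_range_self A.mulVecLin (f' x)), zero_add]
    set x0 : Fin d → ℝ := 0 with hx0
    have hD : HasFDerivAt (fun x => πC (f x)) (πC.comp (fderiv ℝ f x0)) x0 :=
      πC.hasFDerivAt.comp x0 (hdiff x0).hasFDerivAt
    have hD0 : HasFDerivAt (fun x => πC (f x)) (0 : (Fin d → ℝ) →L[ℝ] V) x0 := by
      have : (fun x : Fin d → ℝ => πC (f x)) = fun _ => πL c := funext hconst
      rw [this]; exact hasFDerivAt_const _ _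
    have hcomp0 : πC.comp (fderiv ℝ f x0) = 0 := hD.unique hD0
    have hle : LinearMap.range (fderiv ℝ f x0).toLinearMap ≤ U := by
      rintro y ⟨v, rfl⟩
      have : πC ((fderiv ℝ f x0) v) = 0 := by
        have := ContinuousLinearMap.ext_iff.mp hcomp0 v
        simpa using this
      have hker : (fderiv ℝ f x0) v ∈ LinearMap.ker πL := by
        simpa [hπCdef] using this
      rwa [Submodule.ker_projectionOnto hV.symm] at hker
    have hfin : Module.finrank ℝ (LinearMap.range (fderiv ℝ f x0).toLinearMap) = min n d := by
      have h1 := hrank x0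
      have h2 : ((Module.finrank ℝ (LinearMap.range (fderiv ℝ f x0).toLinearMap) : Cardinal)
          = ((min n d : ℕ) : Cardinal)) := by
        rw [Module.finrank_eq_rank]; exact h1
      exact_mod_cast h2
    have hmono := Submodule.finrank_mono (R := ℝ) (M := Fin n → ℝ) hle
    rw [hfin] at hmono
    exact hmono
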